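/- Let C ∈ ℝ^{n×n} be symmetric, E ∈ ℝ^{n×p}, G ∈ ℝ^{q×n}, F̄ ∈ ℝ^{q×q} symmetric positive semidefinite, and suppose there exists λ > 0 such that C + λ E Eᵀ + λ⁻¹ Gᵀ F̄ G ⪯ 0. Then C + E F G + Gᵀ Fᵀ Eᵀ ⪯ 0 for all F ∈ ℝ^{p×q} with Fᵀ F ⪯ F̄. -/

import Mathlib

open Matrix

private lemma dp_shift {m k : ℕ} (A : Matrix (Fin m) (Fin k) ℝ) (x : Fin m → ℝ)
    (y : Fin k → ℝ) : x ⬝ᵥ A *ᵥ y = (Aᵀ *ᵥ x) ⬝ᵥ y := by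
  rw [Matrix.dotProduct_mulVec, Matrix.mulVec_transpose]

private lemma dp_self_nonneg {m : ℕ} (v : Fin m → ℝ) : 0 ≤ v ⬝ᵥ v :=
  Finset.sum_nonneg fun _ _ => mul_self_nonneg _

/-- Sufficiency direction of the nonstrict Petersen's lemma. -/
theorem nonstrict_petersen_sufficiency {n p q : ℕ}
    (C : Matrix (Fin n) (Fin n) ℝ) (hC : C.IsSymm)
    (E : Matrix (Fin n) (Fin p) ℝ) (G : Matrix (Fin q) (Fin n) ℝ)
    (Fb : Matrix (Fin q) (Fin q) ℝ) (hFb : Fb.PosSemidef)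
    (lam : ℝ) (hlam : 0 < lam)
    (h : (-(C + lam • (E * Eᵀ) + lam⁻¹ • (Gᵀ * Fb * G))).PosSemidef) :
    ∀ F : Matrix (Fin p) (Fin q) ℝ, (Fb - Fᵀ * F).PosSemidef →
      (-(C + E * F * G + Gᵀ * Fᵀ * Eᵀ)).PosSemidef := by
  intro F hF
  have ht : (E * F * G)ᵀ = Gᵀ * Fᵀ * Eᵀ := by
    rw [Matrix.transpose_mul, Matrix.transpose_mul, ← Matrix.mul_assoc]
  rw [Matrix.posSemidef_iff_dotProduct_mulVec]
  constructor
  · show (-(C + E * F * G + Gᵀ * Fᵀ * Eᵀ))ᴴ = _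
    rw [Matrix.conjTranspose_eq_transpose_of_trivial, Matrix.transpose_neg,
      Matrix.transpose_add, Matrix.transpose_add, hC.eq, ht, ← ht,
      Matrix.transpose_transpose]
    abel
  · intro x
    have hx := h.dotProduct_mulVec_nonneg x
    have hFx := hF.dotProduct_mulVec_nonneg (G *ᵥ x)
    set u := Eᵀ *ᵥ x with hu
    set v := G *ᵥ x with hv
    set w := F *ᵥ v with hw
    have hsq : 0 ≤ (lam • u - w) ⬝ᵥ (lam • u - w) := dp_self_nonneg _
    -- scalar identities
    have e1 : x ⬝ᵥ (E * Eᵀ) *ᵥ x = u ⬝ᵥ u := by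
      rw [← Matrix.mulVec_mulVec, dp_shift, hu]
    have e2 : x ⬝ᵥ (E * F * G) *ᵥ x = u ⬝ᵥ w := by
      rw [Matrix.mul_assoc, ← Matrix.mulVec_mulVec, dp_shift, ← Matrix.mulVec_mulVec,
        hu, ← hv, hw]
    have e3 : x ⬝ᵥ (Gᵀ * Fᵀ * Eᵀ) *ᵥ x = u ⬝ᵥ w := by
      rw [← ht, dp_shift, Matrix.transpose_transpose, dotProduct_comm, e2]
    have e4 : x ⬝ᵥ (Gᵀ * Fb * G) *ᵥ x = v ⬝ᵥ Fb *ᵥ v := by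
      rw [← Matrix.mulVec_mulVec, dp_shift, Matrix.transpose_mul, Matrix.transpose_transpose,
        ← Matrix.mulVec_mulVec, ← hv,
        show Fbᵀ = Fb by rw [← Matrix.conjTranspose_eq_transpose_of_trivial, hFb.1], dotProduct_comm]
    have e5 : v ⬝ᵥ (Fᵀ * F) *ᵥ v = w ⬝ᵥ w := by
      rw [← Matrix.mulVec_mulVec, dp_shift, Matrix.transpose_transpose, hw]
    -- expand hypotheses
    simp only [star_trivial, Matrix.neg_mulVec, Matrix.add_mulVec, Matrix.sub_mulVec,
      Matrix.smul_mulVec, dotProduct_neg, dotProduct_add, dotProduct_sub,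
      dotProduct_smul, smul_eq_mul, ← hv] at hx hFx ⊢
    rw [e1, e4] at hx
    rw [e5] at hFx
    rw [e2, e3]
    have hsq' : 0 ≤ lam * lam * (u ⬝ᵥ u) - 2 * lam * (u ⬝ᵥ w) + w ⬝ᵥ w := by
      have expand : (lam • u - w) ⬝ᵥ (lam • u - w)
          = lam * lam * (u ⬝ᵥ u) - 2 * lam * (u ⬝ᵥ w) + w ⬝ᵥ w := by
        simp only [dotProduct_sub, sub_dotProduct, dotProduct_smul, smul_dotProduct,
          smul_eq_mul]
        rw [dotProduct_comm w u]
        ring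
      rw [← expand]; exact hsq
    have hinv : 0 < lam⁻¹ := inv_pos.mpr hlam
    have hkey : 2 * (u ⬝ᵥ w) ≤ lam * (u ⬝ᵥ u) + lam⁻¹ * (w ⬝ᵥ w) := by
      have h2 := mul_le_mul_of_nonneg_left hsq' (le_of_lt hinv)
      rw [mul_zero] at h2
      have h3 : lam⁻¹ * (lam * lam * (u ⬝ᵥ u) - 2 * lam * (u ⬝ᵥ w) + w ⬝ᵥ w)
          = lam * (u ⬝ᵥ u) - 2 * (u ⬝ᵥ w) + lam⁻¹ * (w ⬝ᵥ w) := by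
        field_simp
      rw [h3] at h2
      linarith
    nlinarith [mul_le_mul_of_nonneg_left hFx (le_of_lt hinv)]
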